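/- With f_{i,j}=u_i ⊗ g^{n-i} w_j as above, for each integer i in [1,m] define x_i = Σ_{j=1}^{i} (−1)^{j−1} f_{j, i+1−j}. Then x_1,…,x_m are linearly independent over K and (g−1)·x_i = 0 for all i. -/

import Mathlib

theorem stmt_1 {K : Type*} [Field K] {M : Type*} [AddCommGroup M] [Module K M]
    {m n : ℕ} (hm : 1 ≤ m) (hmn : m ≤ n)
    (f : ℕ → ℕ → M)
    (hind : LinearIndependent K (fun ij : Fin m × Fin n =>
      f ((ij.1 : ℕ) + 1) ((ij.2 : ℕ) + 1)))
    (hzero : ∀ i j, (i = 0 ∨ j = 0) → f i j = 0)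
    (T : M →ₗ[K] M)
    (hT : ∀ i j, 1 ≤ i → i ≤ m → 1 ≤ j → j ≤ n →
      T (f i j) = f (i - 1) j + f i (j - 1))
    (x : ℕ → M)
    (hx : ∀ i, x i = ∑ j ∈ Finset.Icc 1 i, ((-1 : K) ^ (j - 1)) • f j (i + 1 - j)) :
    LinearIndependent K (fun i : Fin m => x ((i : ℕ) + 1)) ∧
    (∀ i, 1 ≤ i → i ≤ m → T (x i) = 0) := by
  constructor
  · rw [Fintype.linearIndependent_iff]
    intro c hc i
    rw [Fintype.linearIndependent_iff] at hind
    set c' : ℕ → K := fun k => if h : k < m then c ⟨k, h⟩ else 0 with hc'def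
    have key : ∀ ab : Fin m × Fin n,
        ((-1 : K) ^ (ab.1 : ℕ) * c' ((ab.1 : ℕ) + (ab.2 : ℕ))) = 0 := by
      apply hind
      have main : ∑ ab : Fin m × Fin n,
          ((-1:K) ^ (ab.1:ℕ) * c' ((ab.1:ℕ) + (ab.2:ℕ))) • f ((ab.1:ℕ)+1) ((ab.2:ℕ)+1)
          = ∑ i : Fin m, c i • x ((i:ℕ)+1) := by
        rw [Fintype.sum_prod_type]
        have lhs1 : ∑ a : Fin m, ∑ b : Fin n,
            ((-1:K) ^ (a:ℕ) * c' ((a:ℕ) + (b:ℕ))) • f ((a:ℕ)+1) ((b:ℕ)+1)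
            = ∑ a ∈ Finset.range m, ∑ b ∈ Finset.range n,
              ((-1:K) ^ a * c' (a + b)) • f (a+1) (b+1) := by
          rw [Fin.sum_univ_eq_sum_range (fun a => ∑ b : Fin n,
            ((-1:K) ^ a * c' (a + (b:ℕ))) • f (a+1) ((b:ℕ)+1))]
          exact Finset.sum_congr rfl fun a _ =>
            Fin.sum_univ_eq_sum_range (fun b => ((-1:K) ^ a * c' (a + b)) • f (a+1) (b+1)) n
        have rhs1 : ∑ i : Fin m, c i • x ((i:ℕ)+1)
            = ∑ i ∈ Finset.range m, c' i • x (i+1) := by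
          rw [show (∑ i : Fin m, c i • x ((i:ℕ)+1)) = ∑ i : Fin m, c' (i:ℕ) • x ((i:ℕ)+1) from
            Finset.sum_congr rfl fun i _ => by simp [hc'def, i.isLt]]
          exact Fin.sum_univ_eq_sum_range (fun i => c' i • x (i+1)) m
        rw [lhs1, rhs1]
        -- shrink inner sums on LHS
        have lhs2 : ∀ a ∈ Finset.range m,
            ∑ b ∈ Finset.range n, ((-1:K) ^ a * c' (a + b)) • f (a+1) (b+1)
            = ∑ b ∈ Finset.range (m - a), ((-1:K) ^ a * c' (a + b)) • f (a+1) (b+1) := by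
          intro a ha
          simp only [Finset.mem_range] at ha
          refine (Finset.sum_subset ?_ ?_).symm
          · exact Finset.range_subset_range.2 (le_trans (Nat.sub_le m a) hmn)
          · intro b _ hb
            simp only [Finset.mem_range, not_lt] at hb
            have hge : ¬ (a + b < m) := by omega
            have : c' (a + b) = 0 := by
              simp only [hc'def]
              rw [dif_neg hge]
            rw [this, mul_zero, zero_smul]
        rw [Finset.sum_congr rfl lhs2]
        -- expand RHS with hx and reindex
        have rhs2 : ∀ i ∈ Finset.range m,
            c' i • x (i+1) = ∑ k ∈ Finset.range (i+1), (c' i * (-1:K)^k) • f (k+1) (i+1-k) := by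
          intro i _
          rw [hx, Finset.smul_sum]
          have : Finset.Icc 1 (i+1) = Finset.Ico 1 (i+2) := by
            exact (Finset.Ico_add_one_right_eq_Icc 1 (i+1)).symm
          rw [this, Finset.sum_Ico_eq_sum_range]
          apply Finset.sum_congr (by congr 1)
          intro k _
          rw [smul_smul]
          have h1 : 1 + k - 1 = k := by omega
          have h2 : i + 1 + 1 - (1 + k) = i + 1 - k := by omega
          have h3 : 1 + k = k + 1 := by omega
          rw [h1, h2, h3]
        rw [Finset.sum_congr rfl rhs2]
        rw [Finset.sum_sigma', Finset.sum_sigma']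
        refine Finset.sum_nbij' (fun p => ⟨p.1 + p.2, p.1⟩) (fun p => ⟨p.2, p.1 - p.2⟩)
          ?_ ?_ ?_ ?_ ?_
        · rintro ⟨a, b⟩ hab
          simp only [Finset.mem_sigma, Finset.mem_range] at hab ⊢
          clear * - hab
          omega
        · rintro ⟨i, k⟩ hik
          simp only [Finset.mem_sigma, Finset.mem_range] at hik ⊢
          omega
        · rintro ⟨a, b⟩ hab
          simp only [Finset.mem_sigma, Finset.mem_range] at hab
          dsimp only at hab ⊢
          simp only [Sigma.mk.inj_iff]
          constructor <;> first | trivial | exact heq_of_eq (by omega) | omega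
        · rintro ⟨i, k⟩ hik
          simp only [Finset.mem_sigma, Finset.mem_range] at hik
          dsimp only at hik ⊢
          simp only [Sigma.mk.inj_iff]
          constructor <;> first | trivial | exact heq_of_eq (by omega) | omega
        · rintro ⟨a, b⟩ hab
          simp only [Finset.mem_sigma, Finset.mem_range] at hab
          dsimp only at hab ⊢
          rw [mul_comm]
          have h4 : a + b + 1 - a = b + 1 := by omega
          rw [h4]
      rw [main, hc]
    have h2 := key (⟨0, hm⟩, ⟨(i:ℕ), lt_of_lt_of_le i.isLt hmn⟩)
    simpa [hc'def, i.isLt] using h2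
  · intro i h1 h2
    rw [hx, map_sum]
    set F : ℕ → M := fun k => ((-1:K)^k) • f k (i-k) with hF
    have step : ∀ j ∈ Finset.Icc 1 i,
        T (((-1:K)^(j-1)) • f j (i+1-j)) = F (j-1) - F j := by
      intro j hj
      simp only [Finset.mem_Icc] at hj
      rw [map_smul, hT j (i+1-j) hj.1 (le_trans hj.2 h2) (by omega) (by omega), smul_add]
      have e1 : ((-1:K)^(j-1)) • f (j-1) (i+1-j) = F (j-1) := by
        simp only [hF]
        congr 2
        omega
      have e2 : ((-1:K)^(j-1)) • f j (i+1-j-1) = -F j := by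
        simp only [hF]
        have h4 : i + 1 - j - 1 = i - j := by omega
        have h5 : ((-1:K)^j) = -((-1:K)^(j-1)) := by
          rw [show j = (j-1)+1 from by omega, pow_succ, Nat.add_sub_cancel]
          ring
        rw [h4, h5, neg_smul, neg_neg]
      rw [e1, e2]
      abel
    rw [Finset.sum_congr rfl step]
    have : Finset.Icc 1 i = Finset.Ico 1 (i+1) := by rw [Finset.Ico_add_one_right_eq_Icc]
    rw [this, Finset.sum_Ico_eq_sum_range]
    have : ∀ k ∈ Finset.range (i+1-1), F (1 + k - 1) - F (1 + k) = F k - F (k+1) := by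
      intro k _
      congr 1
      · congr 1; omega
      · congr 1; omega
    rw [Finset.sum_congr (by congr 1) this, Finset.sum_range_sub']
    have f0 : F 0 = 0 := by simp [hF, hzero 0 i (Or.inl rfl)]
    have fi : F (i+1-1) = 0 := by
      have : i + 1 - 1 = i := by omega
      rw [this]
      simp [hF, hzero i 0 (Or.inr rfl)]
    rw [f0, fi, sub_zero]
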